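/- Let n be odd and N = 2^n. A matrix F ∈ SU(N) satisfies F Σ⁻¹ · conj(F† X F) · Σ F† = S⁻¹ X̄ S for every X ∈ su(N) (i.e., F is a finagler, intertwining the Cartan involution X ↦ Σ⁻¹ X̄ Σ with the involution θ(X) = S⁻¹ X̄ S) if and only if F Σᵀ Fᵀ = ξ S for some ξ ∈ ℂ with ξ^N = 1. -/

import Mathlib

open Matrix Complex

noncomputable section

/-- Number of ones in the binary expansion of `j`. -/
def popCnt (j : ℕ) : ℕ := (Nat.digits 2 j).sum

/-- The `N × N` matrix `S = (-iσ^y) ⊗ ⋯ ⊗ (-iσ^y)` (`n` factors), `N = 2^n`;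
equivalently `S |j⟩ = (-1)^{#j} |N-1-j⟩`. -/
def Smat (n : ℕ) : Matrix (Fin (2 ^ n)) (Fin (2 ^ n)) ℂ :=
  fun k j => if (k : ℕ) + (j : ℕ) = 2 ^ n - 1 then (-1 : ℂ) ^ popCnt (j : ℕ) else 0

/-- The standard entangler `E₀` (for `n` even):
`E₀ = (1/√2) Σ_{j<N/2} ( |j⟩⟨2j| + i|j⟩⟨2j+1| + (-1)^{#j}(|N-j-1⟩⟨2j| - i|N-j-1⟩⟨2j+1|) )`. -/
def E0 (n : ℕ) : Matrix (Fin (2 ^ n)) (Fin (2 ^ n)) ℂ :=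
  fun r c =>
    (Real.sqrt 2 : ℂ)⁻¹ *
      (if (r : ℕ) < 2 ^ n / 2 then
        (if (c : ℕ) = 2 * (r : ℕ) then 1
         else if (c : ℕ) = 2 * (r : ℕ) + 1 then Complex.I else 0)
      else
        (if (c : ℕ) = 2 * (2 ^ n - 1 - (r : ℕ)) then
            (-1 : ℂ) ^ popCnt (2 ^ n - 1 - (r : ℕ))
         else if (c : ℕ) = 2 * (2 ^ n - 1 - (r : ℕ)) + 1 then
            -Complex.I * (-1 : ℂ) ^ popCnt (2 ^ n - 1 - (r : ℕ))
         else 0))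

/-- `Σ = Σ_{j<N/2} ( |j⟩⟨N/2+j| - |N/2+j⟩⟨j| )`. -/
def SigmaMat (n : ℕ) : Matrix (Fin (2 ^ n)) (Fin (2 ^ n)) ℂ :=
  fun r c =>
    if (c : ℕ) = (r : ℕ) + 2 ^ n / 2 then 1
    else if (r : ℕ) = (c : ℕ) + 2 ^ n / 2 then -1 else 0

/-- The standard finagler `F₀` (for `n` odd):
`F₀ = (1/√2) Σ_{j<N/2} ( |j⟩⟨j| + |N-j-1⟩⟨j| + (-1)^{#j}(|j⟩⟨N/2+j| - |N-j-1⟩⟨N/2+j|) )`. -/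
def F0 (n : ℕ) : Matrix (Fin (2 ^ n)) (Fin (2 ^ n)) ℂ :=
  fun r c =>
    (Real.sqrt 2 : ℂ)⁻¹ *
      (if (r : ℕ) < 2 ^ n / 2 then
        (if (c : ℕ) = (r : ℕ) then 1
         else if (c : ℕ) = (r : ℕ) + 2 ^ n / 2 then (-1 : ℂ) ^ popCnt (r : ℕ) else 0)
      else
        (if (c : ℕ) = 2 ^ n - 1 - (r : ℕ) then 1
         else if (c : ℕ) = (2 ^ n - 1 - (r : ℕ)) + 2 ^ n / 2 then
            -(-1 : ℂ) ^ popCnt (2 ^ n - 1 - (r : ℕ))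
         else 0))

/-- The concurrence capacity `κ(v) = sup { |(vψ)ᵀ S (vψ)| : ‖ψ‖ = 1, ψᵀSψ = 0 }`. -/
def kappa (n : ℕ) (v : Matrix (Fin (2 ^ n)) (Fin (2 ^ n)) ℂ) : ℝ :=
  sSup { r : ℝ | ∃ ψ : Fin (2 ^ n) → ℂ,
    star ψ ⬝ᵥ ψ = 1 ∧ ψ ⬝ᵥ ((Smat n) *ᵥ ψ) = 0 ∧
    r = ‖(v *ᵥ ψ) ⬝ᵥ ((Smat n) *ᵥ (v *ᵥ ψ))‖ }



lemma popCnt_two_mul_add (q r : ℕ) (hr : r < 2) : popCnt (2 * q + r) = popCnt q + r := by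
  rcases Nat.eq_zero_or_pos (2 * q + r) with h | h
  · have hq : q = 0 := by omega
    have hr0 : r = 0 := by omega
    simp [hq, hr0, popCnt]
  · unfold popCnt
    rw [Nat.digits_def' (by norm_num : 1 < 2) h]
    have h1 : (2 * q + r) % 2 = r := by omega
    have h2 : (2 * q + r) / 2 = q := by omega
    rw [h1, h2]
    simp [List.sum_cons]
    ring

lemma popCnt_compl (n : ℕ) : ∀ j, j < 2 ^ n → popCnt j + popCnt (2 ^ n - 1 - j) = n := by
  induction n with
  | zero => intro j hj; interval_cases j; simp [popCnt]
  | succ n ih =>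
    intro j hj
    obtain ⟨q, r, hr, rfl⟩ : ∃ q r, r < 2 ∧ j = 2 * q + r := ⟨j / 2, j % 2, by omega, by omega⟩
    have hq : q < 2 ^ n := by rw [pow_succ] at hj; omega
    have hc : 2 ^ (n+1) - 1 - (2 * q + r) = 2 * (2 ^ n - 1 - q) + (1 - r) := by
      rw [pow_succ] at *
      have h2 : (0:ℕ) < 2 ^ n := pow_pos (by norm_num) _
      omega
    rw [hc, popCnt_two_mul_add q r hr, popCnt_two_mul_add _ _ (by omega : 1 - r < 2)]
    have := ih q hq
    omega

lemma popCnt_add_pow (k : ℕ) : ∀ j, j < 2 ^ k → popCnt (2 ^ k + j) = 1 + popCnt j := by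
  induction k with
  | zero => intro j hj; interval_cases j; simp [popCnt]
  | succ k ih =>
    intro j hj
    obtain ⟨q, r, hr, rfl⟩ : ∃ q r, r < 2 ∧ j = 2 * q + r := ⟨j / 2, j % 2, by omega, by omega⟩
    have hq : q < 2 ^ k := by rw [pow_succ] at hj; omega
    have h1 : 2 ^ (k+1) + (2 * q + r) = 2 * (2 ^ k + q) + r := by rw [pow_succ] at *; omega
    rw [h1, popCnt_two_mul_add _ _ hr, ih _ hq, popCnt_two_mul_add _ _ hr]
    ring




lemma Smat_mul_self (n : ℕ) (hodd : Odd n) : Smat n * Smat n = -1 := by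
  have hN : 0 < 2 ^ n := pow_pos two_pos _
  ext k j
  rw [Matrix.mul_apply, Finset.sum_eq_single k.rev]
  · have hk : (k.rev : ℕ) = 2 ^ n - 1 - (k : ℕ) := by rw [Fin.val_rev]; omega
    simp only [Smat, hk, Matrix.neg_apply, Matrix.one_apply]
    rw [if_pos (by omega : (k:ℕ) + (2 ^ n - 1 - (k:ℕ)) = 2 ^ n - 1)]
    by_cases hkj : k = j
    · subst hkj
      rw [if_pos (by omega : (2 ^ n - 1 - (k:ℕ)) + (k:ℕ) = 2 ^ n - 1), if_pos rfl]
      rw [← pow_add]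
      have hp : popCnt (k:ℕ) + popCnt (2 ^ n - 1 - (k:ℕ)) = n := popCnt_compl n k k.isLt
      rw [add_comm (popCnt (2 ^ n - 1 - (k:ℕ)))] at *
      rw [hp, Odd.neg_one_pow hodd]
    · have hkj' : (k : ℕ) ≠ (j : ℕ) := fun h => hkj (Fin.ext h)
      rw [if_neg (by omega), if_neg hkj, mul_zero, neg_zero]
  · intro m _ hm
    have hmv : (m : ℕ) ≠ 2 ^ n - 1 - (k : ℕ) := by
      intro h
      exact hm (Fin.ext (by rw [Fin.val_rev]; omega))
    have : (k:ℕ) + (m:ℕ) ≠ 2 ^ n - 1 := by omega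
    simp [Smat, this]
  · intro h; exact absurd (Finset.mem_univ _) h

lemma Smat_transpose (n : ℕ) (hodd : Odd n) : (Smat n)ᵀ = -(Smat n) := by
  ext k j
  simp only [Matrix.transpose_apply, Matrix.neg_apply, Smat]
  by_cases h : (k:ℕ) + (j:ℕ) = 2 ^ n - 1
  · rw [if_pos (by omega), if_pos h]
    have hp : popCnt (j:ℕ) + popCnt (k:ℕ) = n := by
      have := popCnt_compl n j j.isLt
      have hk : (k:ℕ) = 2 ^ n - 1 - (j:ℕ) := by omega
      rw [← hk] at this; exact this
    have : ((-1:ℂ) ^ popCnt (j:ℕ)) * ((-1:ℂ) ^ popCnt (k:ℕ)) = -1 := by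
      rw [← pow_add, hp, Odd.neg_one_pow hodd]
    have h2j : ((-1:ℂ) ^ popCnt (j:ℕ)) ^ 2 = 1 := by
      rw [← pow_mul, pow_mul']; norm_num
    linear_combination ((-1:ℂ) ^ popCnt (j:ℕ)) * this - ((-1:ℂ) ^ popCnt (k:ℕ)) * h2j
  · rw [if_neg (by omega), if_neg h, neg_zero]

lemma Smat_real (n : ℕ) : (Smat n).map (starRingEnd ℂ) = Smat n := by
  ext k j
  simp only [Matrix.map_apply, Smat]
  split_ifs <;> simp

lemma hhalf (n : ℕ) (hn : 1 ≤ n) : 2 ^ n / 2 + 2 ^ n / 2 = 2 ^ n := by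
  obtain ⟨m, rfl⟩ : ∃ m, n = m + 1 := ⟨n - 1, by omega⟩
  rw [pow_succ]
  have : 0 < 2 ^ m := pow_pos two_pos _
  omega

lemma hhalf_pos (n : ℕ) (hn : 1 ≤ n) : 1 ≤ 2 ^ n / 2 := by
  have h := hhalf n hn
  have : 0 < 2 ^ n := pow_pos two_pos _
  omega

lemma SigmaMat_transpose (n : ℕ) (hn : 1 ≤ n) : (SigmaMat n)ᵀ = -(SigmaMat n) := by
  have hp := hhalf_pos n hn
  ext r c
  simp only [Matrix.transpose_apply, Matrix.neg_apply, SigmaMat]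
  split_ifs <;> first | (exfalso; omega) | norm_num

lemma SigmaMat_mul_self (n : ℕ) (hn : 1 ≤ n) : SigmaMat n * SigmaMat n = -1 := by
  have hh := hhalf n hn
  have hp := hhalf_pos n hn
  ext r c
  have hc := c.isLt
  have hr' := r.isLt
  rw [Matrix.mul_apply]
  by_cases hr : (r : ℕ) < 2 ^ n / 2
  · rw [Finset.sum_eq_single (⟨(r:ℕ) + 2 ^ n / 2, by omega⟩ : Fin (2 ^ n))]
    · simp only [SigmaMat, Matrix.neg_apply, Matrix.one_apply, Fin.ext_iff]
      split_ifs <;> first | (exfalso; omega) | norm_num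
    · intro m _ hm
      have hmv : (m:ℕ) ≠ (r:ℕ) + 2 ^ n / 2 := fun h => hm (Fin.ext h)
      simp only [SigmaMat]
      split_ifs <;> first | (exfalso; omega) | norm_num
    · intro h; exact absurd (Finset.mem_univ _) h
  · rw [Finset.sum_eq_single (⟨(r:ℕ) - 2 ^ n / 2, by omega⟩ : Fin (2 ^ n))]
    · simp only [SigmaMat, Matrix.neg_apply, Matrix.one_apply, Fin.ext_iff]
      split_ifs <;> first | (exfalso; omega) | norm_num
    · intro m _ hm
      have hmv : (m:ℕ) ≠ (r:ℕ) - 2 ^ n / 2 := fun h => hm (Fin.ext h)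
      simp only [SigmaMat]
      split_ifs <;> first | (exfalso; omega) | norm_num
    · intro h; exact absurd (Finset.mem_univ _) h

lemma SigmaMat_real (n : ℕ) : (SigmaMat n).map (starRingEnd ℂ) = SigmaMat n := by
  ext k j
  simp only [Matrix.map_apply, SigmaMat]
  split_ifs <;> simp

lemma SigmaMat_mul_transpose (n : ℕ) (hn : 1 ≤ n) : SigmaMat n * (SigmaMat n)ᵀ = 1 := by
  rw [SigmaMat_transpose n hn, Matrix.mul_neg, SigmaMat_mul_self n hn]; simp

lemma SigmaMat_inv (n : ℕ) (hn : 1 ≤ n) : (SigmaMat n)⁻¹ = (SigmaMat n)ᵀ :=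
  Matrix.inv_eq_right_inv (SigmaMat_mul_transpose n hn)

lemma Smat_mul_transpose (n : ℕ) (hodd : Odd n) : Smat n * (Smat n)ᵀ = 1 := by
  rw [Smat_transpose n hodd, Matrix.mul_neg, Smat_mul_self n hodd]; simp

lemma Smat_inv (n : ℕ) (hodd : Odd n) : (Smat n)⁻¹ = (Smat n)ᵀ :=
  Matrix.inv_eq_right_inv (Smat_mul_transpose n hodd)

def S2 : Matrix (Fin 2) (Fin 2) ℂ :=
  fun a b => if (a:ℕ) + (b:ℕ) = 1 then (-1:ℂ) ^ (b:ℕ) else 0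

def B2 : Matrix (Fin 2) (Fin 2) ℂ :=
  fun a b => if (b:ℕ) = (a:ℕ) + 1 then (1:ℂ) else if (a:ℕ) = (b:ℕ) + 1 then -1 else 0

open Kronecker in
lemma Smat_succ (k : ℕ) :
    Smat (k + 1) = Matrix.reindex
      (finProdFinEquiv.trans (finCongr (by rw [pow_succ, mul_comm] : 2 * 2 ^ k = 2 ^ (k+1))))
      (finProdFinEquiv.trans (finCongr (by rw [pow_succ, mul_comm] : 2 * 2 ^ k = 2 ^ (k+1))))
      (S2 ⊗ₖ Smat k) := by
  set e := finProdFinEquiv.trans (finCongr (by rw [pow_succ, mul_comm] : 2 * 2 ^ k = 2 ^ (k+1)))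
  have hk : 0 < 2 ^ k := pow_pos two_pos _
  ext u v
  obtain ⟨⟨a, x⟩, rfl⟩ := e.surjective u
  obtain ⟨⟨b, y⟩, rfl⟩ := e.surjective v
  rw [Matrix.reindex_apply, Matrix.submatrix_apply, Equiv.symm_apply_apply,
    Equiv.symm_apply_apply]
  have he : ∀ (a : Fin 2) (x : Fin (2 ^ k)), ((e (a, x) : Fin (2 ^ (k+1))) : ℕ) = (x:ℕ) + 2 ^ k * (a:ℕ) := by
    intro a x; simp [e, finProdFinEquiv]
  rw [Matrix.kroneckerMap_apply]
  simp only [Smat, he]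
  have hx := x.isLt
  have hy := y.isLt
  fin_cases a <;> fin_cases b <;> simp only [S2] <;> norm_num
  · rw [pow_succ]; omega
  · have hiff : (x:ℕ) + ((y:ℕ) + 2 ^ k) = 2 ^ (k+1) - 1 ↔ (x:ℕ) + (y:ℕ) = 2 ^ k - 1 := by
      rw [pow_succ]; omega
    by_cases h : (x:ℕ) + (y:ℕ) = 2 ^ k - 1
    · rw [if_pos (hiff.mpr h), if_pos h, add_comm (y:ℕ) (2 ^ k), popCnt_add_pow k y hy,
        pow_add, pow_one]
      ring
    · rw [if_neg (fun hc => h (hiff.mp hc)), if_neg h]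
  · have hiff : (x:ℕ) + 2 ^ k + (y:ℕ) = 2 ^ (k+1) - 1 ↔ (x:ℕ) + (y:ℕ) = 2 ^ k - 1 := by
      rw [pow_succ]; omega
    by_cases h : (x:ℕ) + (y:ℕ) = 2 ^ k - 1
    · rw [if_pos (hiff.mpr h), if_pos h]
    · rw [if_neg (fun hc => h (hiff.mp hc)), if_neg h]
  · rw [pow_succ]; omega

lemma Smat_det (n : ℕ) : (Smat n).det = 1 := by
  induction n with
  | zero =>
    rw [Matrix.det_fin_one]
    simp [Smat, popCnt]
  | succ k ih =>
    rw [Smat_succ k, Matrix.det_reindex_self, Matrix.det_kronecker, ih]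
    norm_num [Matrix.det_fin_two, S2]

open Kronecker in
lemma SigmaMat_succ (k : ℕ) :
    SigmaMat (k + 1) = Matrix.reindex
      (finProdFinEquiv.trans (finCongr (by rw [pow_succ, mul_comm] : 2 * 2 ^ k = 2 ^ (k+1))))
      (finProdFinEquiv.trans (finCongr (by rw [pow_succ, mul_comm] : 2 * 2 ^ k = 2 ^ (k+1))))
      (B2 ⊗ₖ (1 : Matrix (Fin (2 ^ k)) (Fin (2 ^ k)) ℂ)) := by
  set e := finProdFinEquiv.trans (finCongr (by rw [pow_succ, mul_comm] : 2 * 2 ^ k = 2 ^ (k+1)))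
  have hk : 0 < 2 ^ k := pow_pos two_pos _
  have hh : 2 ^ (k+1) / 2 = 2 ^ k := by rw [pow_succ]; omega
  ext u v
  obtain ⟨⟨a, x⟩, rfl⟩ := e.surjective u
  obtain ⟨⟨b, y⟩, rfl⟩ := e.surjective v
  rw [Matrix.reindex_apply, Matrix.submatrix_apply, Equiv.symm_apply_apply,
    Equiv.symm_apply_apply]
  have he : ∀ (a : Fin 2) (x : Fin (2 ^ k)), ((e (a, x) : Fin (2 ^ (k+1))) : ℕ) = (x:ℕ) + 2 ^ k * (a:ℕ) := by
    intro a x; simp [e, finProdFinEquiv]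
  rw [Matrix.kroneckerMap_apply]
  simp only [SigmaMat, he, hh, Matrix.one_apply, Fin.ext_iff]
  have hx := x.isLt
  have hy := y.isLt
  fin_cases a <;> fin_cases b <;> simp only [B2] <;> norm_num <;>
    (intros; split_ifs <;> first | rfl | (exfalso; omega))
lemma SigmaMat_det (n : ℕ) (hn : 1 ≤ n) : (SigmaMat n).det = 1 := by
  obtain ⟨k, rfl⟩ : ∃ k, n = k + 1 := ⟨n - 1, by omega⟩
  rw [SigmaMat_succ k, Matrix.det_reindex_self, Matrix.det_kronecker, Matrix.det_one]
  norm_num [Matrix.det_fin_two, B2]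

lemma trace_map_conj {m : Type*} [Fintype m] (A : Matrix m m ℂ) :
    (A.map (starRingEnd ℂ)).trace = (starRingEnd ℂ) A.trace := by
  simp [Matrix.trace, Matrix.diag, map_sum]

lemma map_conj_conj {m l : Type*} (A : Matrix m l ℂ) :
    (A.map (starRingEnd ℂ)).map (starRingEnd ℂ) = A := by
  ext i j; simp

lemma scalar_of_commutes (n : ℕ) (T : Matrix (Fin (2 ^ n)) (Fin (2 ^ n)) ℂ)
    (h : ∀ X : Matrix (Fin (2 ^ n)) (Fin (2 ^ n)) ℂ, Xᴴ = -X → X.trace = 0 → T * X = X * T) :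
    ∃ ξ : ℂ, T = ξ • (1 : Matrix (Fin (2 ^ n)) (Fin (2 ^ n)) ℂ) := by
  have hall : ∀ A : Matrix (Fin (2 ^ n)) (Fin (2 ^ n)) ℂ, A.trace = 0 → T * A = A * T := by
    intro A hA
    have h1 : T * (A - Aᴴ) = (A - Aᴴ) * T := by
      apply h
      · simp
      · simp [Matrix.trace_sub, Matrix.trace_conjTranspose, hA]
    have h2 : T * (Complex.I • (A + Aᴴ)) = (Complex.I • (A + Aᴴ)) * T := by
      apply h
      · rw [Matrix.conjTranspose_smul]
        simp only [Matrix.conjTranspose_add, Matrix.conjTranspose_conjTranspose]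
        rw [Complex.star_def, Complex.conj_I, neg_smul, add_comm]
      · simp [Matrix.trace_smul, Matrix.trace_add, Matrix.trace_conjTranspose, hA]
    have key : A = (2:ℂ)⁻¹ • ((A - Aᴴ) - Complex.I • (Complex.I • (A + Aᴴ))) := by
      have hI : Complex.I • (Complex.I • (A + Aᴴ)) = -(A + Aᴴ) := by
        rw [smul_smul, Complex.I_mul_I, neg_one_smul]
      rw [hI, sub_neg_eq_add]
      module
    calc T * A = (2:ℂ)⁻¹ • (T * ((A - Aᴴ) - Complex.I • (Complex.I • (A + Aᴴ)))) := by
          rw [← Matrix.mul_smul, ← key]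
      _ = (2:ℂ)⁻¹ • ((((A - Aᴴ) - Complex.I • (Complex.I • (A + Aᴴ)))) * T) := by
          have h2' : T * (A + Aᴴ) = (A + Aᴴ) * T := by
            have h3 := h2
            rw [Matrix.mul_smul, Matrix.smul_mul] at h3
            exact smul_right_injective _ Complex.I_ne_zero h3
          simp only [Matrix.mul_sub, Matrix.sub_mul, Matrix.mul_smul, Matrix.smul_mul, h1, h2']
      _ = A * T := by rw [← Matrix.smul_mul, ← key]
  have hstd : Pairwise fun i j : Fin (2 ^ n) =>
      Commute (Matrix.single i j 1) T := by
    intro i j hij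
    exact (hall _ (Matrix.trace_single_eq_of_ne i j _ hij)).symm
  obtain ⟨ξ, hξ⟩ := Matrix.mem_range_scalar_of_commute_single hstd
  refine ⟨ξ, ?_⟩
  rw [← hξ]
  ext i j
  simp [Matrix.scalar_apply, Matrix.smul_apply, Matrix.one_apply, Matrix.diagonal]

lemma map_conj_smul {m l : Type*} (c : ℂ) (A : Matrix m l ℂ) :
    ((c • A).map (starRingEnd ℂ)) = (starRingEnd ℂ) c • A.map (starRingEnd ℂ) := by
  ext i j; simp

/-- **Characterization of finaglers** (for `n` odd): `F ∈ SU(2^n)` intertwines the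
Cartan involution `X ↦ Σ⁻¹ X̄ Σ` with `θ(X) = S⁻¹ X̄ S` iff `F Σᵀ Fᵀ = ξ S` for some
`N`-th root of unity `ξ`. -/
theorem finagler_iff (n : ℕ) (hn : 1 ≤ n) (hodd : Odd n)
    (F : Matrix (Fin (2 ^ n)) (Fin (2 ^ n)) ℂ)
    (hF : F ∈ Matrix.unitaryGroup (Fin (2 ^ n)) ℂ) (hFdet : F.det = 1) :
    (∀ X : Matrix (Fin (2 ^ n)) (Fin (2 ^ n)) ℂ, Xᴴ = -X → X.trace = 0 →
        F * (SigmaMat n)⁻¹ * ((Fᴴ * X * F).map (starRingEnd ℂ)) * SigmaMat n * Fᴴ =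
          (Smat n)⁻¹ * (X.map (starRingEnd ℂ)) * Smat n) ↔
      (∃ ξ : ℂ, ξ ^ (2 ^ n) = 1 ∧ F * (SigmaMat n)ᵀ * Fᵀ = ξ • Smat n) := by
  have hSinv : (Smat n)⁻¹ = (Smat n)ᵀ := Smat_inv n hodd
  have hGinv : (SigmaMat n)⁻¹ = (SigmaMat n)ᵀ := SigmaMat_inv n hn
  have hSt : (Smat n)ᵀ = -(Smat n) := Smat_transpose n hodd
  have hGt : (SigmaMat n)ᵀ = -(SigmaMat n) := SigmaMat_transpose n hn
  have hSS : Smat n * Smat n = -1 := Smat_mul_self n hodd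
  have hGG : SigmaMat n * SigmaMat n = -1 := SigmaMat_mul_self n hn
  have hFFH : F * Fᴴ = 1 := by rw [← Matrix.star_eq_conjTranspose]; exact hF.2
  have hHFF : Fᴴ * F = 1 := by rw [← Matrix.star_eq_conjTranspose]; exact hF.1
  have hFHc : Fᴴ.map (starRingEnd ℂ) = Fᵀ := by
    ext i j; simp [Matrix.conjTranspose_apply]
  have hFTc : Fᵀ.map (starRingEnd ℂ) = Fᴴ := by
    ext i j; simp [Matrix.conjTranspose_apply]
  have hTc : Fᵀ * F.map (starRingEnd ℂ) = 1 := by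
    have := congrArg (fun B => B.map (starRingEnd ℂ)) hHFF
    simpa [Matrix.map_mul, hFHc] using this
  have hcT : F.map (starRingEnd ℂ) * Fᵀ = 1 := by
    have := congrArg (fun B => B.map (starRingEnd ℂ)) hFFH
    simpa [Matrix.map_mul, hFHc] using this
  have cS : ∀ B : Matrix (Fin (2 ^ n)) (Fin (2 ^ n)) ℂ, Smat n * (Smat n * B) = -B := by
    intro B; rw [← Matrix.mul_assoc, hSS]; simp
  have cG : ∀ B : Matrix (Fin (2 ^ n)) (Fin (2 ^ n)) ℂ, SigmaMat n * (SigmaMat n * B) = -B := by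
    intro B; rw [← Matrix.mul_assoc, hGG]; simp
  have cF1 : ∀ B : Matrix (Fin (2 ^ n)) (Fin (2 ^ n)) ℂ, F * (Fᴴ * B) = B := by
    intro B; rw [← Matrix.mul_assoc, hFFH, Matrix.one_mul]
  have cF2 : ∀ B : Matrix (Fin (2 ^ n)) (Fin (2 ^ n)) ℂ, Fᴴ * (F * B) = B := by
    intro B; rw [← Matrix.mul_assoc, hHFF, Matrix.one_mul]
  have cF3 : ∀ B : Matrix (Fin (2 ^ n)) (Fin (2 ^ n)) ℂ,
      Fᵀ * (F.map (starRingEnd ℂ) * B) = B := by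
    intro B; rw [← Matrix.mul_assoc, hTc, Matrix.one_mul]
  have cF4 : ∀ B : Matrix (Fin (2 ^ n)) (Fin (2 ^ n)) ℂ,
      F.map (starRingEnd ℂ) * (Fᵀ * B) = B := by
    intro B; rw [← Matrix.mul_assoc, hcT, Matrix.one_mul]
  have hGc : (SigmaMat n)ᵀ.map (starRingEnd ℂ) = (SigmaMat n)ᵀ := by
    rw [Matrix.transpose_map, SigmaMat_real]
  have hMc : (F * (SigmaMat n)ᵀ * Fᵀ).map (starRingEnd ℂ)
      = F.map (starRingEnd ℂ) * (SigmaMat n)ᵀ * Fᴴ := by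
    rw [Matrix.map_mul, Matrix.map_mul, hFTc, hGc]
  -- the hypothesis side is equivalent to: ∀ good X,  M Xc Mc = S Xc S
  have hstmt : ∀ X : Matrix (Fin (2 ^ n)) (Fin (2 ^ n)) ℂ,
      (F * (SigmaMat n)⁻¹ * ((Fᴴ * X * F).map (starRingEnd ℂ)) * SigmaMat n * Fᴴ =
          (Smat n)⁻¹ * (X.map (starRingEnd ℂ)) * Smat n) ↔
      ((F * (SigmaMat n)ᵀ * Fᵀ) * (X.map (starRingEnd ℂ)) *
          ((F * (SigmaMat n)ᵀ * Fᵀ).map (starRingEnd ℂ)) =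
        Smat n * (X.map (starRingEnd ℂ)) * Smat n) := by
    intro X
    rw [hGinv, hSinv, hMc, Matrix.map_mul, Matrix.map_mul, hFHc]
    constructor
    · intro h
      have e := congrArg (fun B => -B) h
      simp only [Matrix.mul_assoc, hSt, hGt, Matrix.neg_mul, Matrix.mul_neg, neg_neg] at e ⊢
      exact e
    · intro h
      have e := congrArg (fun B => -B) h
      simp only [Matrix.mul_assoc, hSt, hGt, Matrix.neg_mul, Matrix.mul_neg, neg_neg] at e ⊢
      exact e
  constructor
  · intro H
    have key : ∀ Y : Matrix (Fin (2 ^ n)) (Fin (2 ^ n)) ℂ, Yᴴ = -Y → Y.trace = 0 →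
        (F * (SigmaMat n)ᵀ * Fᵀ) * Y * ((F * (SigmaMat n)ᵀ * Fᵀ).map (starRingEnd ℂ)) =
          Smat n * Y * Smat n := by
      intro Y hY1 hY2
      have hX1 : (Y.map (starRingEnd ℂ))ᴴ = -(Y.map (starRingEnd ℂ)) := by
        ext i j
        have h0 := congrFun (congrFun hY1 j) i
        simp only [Matrix.conjTranspose_apply, Matrix.neg_apply, Matrix.map_apply,
          starRingEnd_apply, star_star] at h0 ⊢
        rw [h0, neg_neg]
      have hX2 : (Y.map (starRingEnd ℂ)).trace = 0 := by
        rw [trace_map_conj, hY2, map_zero]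
      have hE := (hstmt _).mp (H _ hX1 hX2)
      rwa [map_conj_conj] at hE
    have hcomm : ∀ Y : Matrix (Fin (2 ^ n)) (Fin (2 ^ n)) ℂ, Yᴴ = -Y → Y.trace = 0 →
        (Smat n * (F * (SigmaMat n)ᵀ * Fᵀ)) * Y = Y * (Smat n * (F * (SigmaMat n)ᵀ * Fᵀ)) := by
      intro Y hY1 hY2
      have e := congrArg (fun B => Smat n * (B * (F * (SigmaMat n)ᵀ * Fᵀ))) (key Y hY1 hY2)
      simp only [hMc] at e
      simp only [Matrix.mul_assoc, hSt, hGt, Matrix.neg_mul, Matrix.mul_neg, neg_neg,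
        cS, cG, cF1, cF2, cF3, cF4, hSS, hGG, hFFH, hHFF, hTc, hcT,
        Matrix.mul_one, Matrix.one_mul] at e ⊢
      rw [neg_inj]
      exact e
    obtain ⟨ξ, hT⟩ := scalar_of_commutes n _ hcomm
    have hMeq : F * (SigmaMat n)ᵀ * Fᵀ = (-ξ) • Smat n := by
      have e2 := congrArg (fun B => Smat n * B) hT
      simp only [cS, Matrix.mul_smul, Matrix.mul_one] at e2
      have e3 := congrArg (fun B : Matrix (Fin (2 ^ n)) (Fin (2 ^ n)) ℂ => -B) e2
      simp only [neg_neg] at e3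
      rw [e3, neg_smul]
    refine ⟨-ξ, ?_, hMeq⟩
    have hdet := congrArg Matrix.det hMeq
    simp only [Matrix.det_mul, Matrix.det_transpose, hFdet, SigmaMat_det n hn,
      Matrix.det_smul, Smat_det, Fintype.card_fin, mul_one, one_mul] at hdet
    exact hdet.symm
  · rintro ⟨ξ, hxi, hMeq⟩ X hX1 hX2
    rw [hstmt X]
    have habs1 : ‖ξ‖ = 1 := by
      have h0 : ‖ξ‖ ^ (2 ^ n) = 1 := by rw [← norm_pow, hxi]; simp
      rcases lt_trichotomy ‖ξ‖ 1 with hlt | heq | hgt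
      · have := pow_lt_one₀ (norm_nonneg ξ) hlt (pow_ne_zero n two_ne_zero)
        rw [h0] at this; exact absurd this (lt_irrefl 1)
      · exact heq
      · have := one_lt_pow₀ hgt (pow_ne_zero n two_ne_zero)
        rw [h0] at this; exact absurd this (lt_irrefl 1)
    have habs : ξ * (starRingEnd ℂ) ξ = 1 := by
      have hns : Complex.normSq ξ = 1 := by rw [← Complex.sq_norm, habs1]; norm_num
      rw [Complex.mul_conj, hns, Complex.ofReal_one]
    rw [hMeq, map_conj_smul, Smat_real]
    simp only [Matrix.smul_mul, Matrix.mul_smul, smul_smul, habs, one_smul]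
    rw [mul_comm, habs, one_smul]
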